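/- Let H be a separable infinite-dimensional complex Hilbert space. There exists a bounded derivation D : K(H) → K(H) that is not inner in K(H): for every compact operator x ∈ K(H) there is some T ∈ K(H) with D(T) ≠ Tx − xT. -/

import Mathlib

open scoped ComplexInnerProductSpace

/-- Rank-one operators are compact. -/
lemma rankOne_isCompactOperator {H : Type*} [NormedAddCommGroup H] [InnerProductSpace ℂ H]
    (u v : H) : IsCompactOperator (fun w => ⟪v, w⟫ • u) := by
  refine ⟨(fun c : ℂ => c • u) '' Metric.closedBall 0 ‖v‖,
    (isCompact_closedBall 0 ‖v‖).image (continuous_id.smul continuous_const), ?_⟩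
  have : Metric.ball (0 : H) 1 ⊆ (fun w => ⟪v, w⟫ • u) ⁻¹'
      ((fun c : ℂ => c • u) '' Metric.closedBall 0 ‖v‖) := by
    intro w hw
    refine ⟨⟪v, w⟫, ?_, rfl⟩
    simp only [Metric.mem_closedBall, dist_zero_right]
    calc ‖⟪v, w⟫‖ ≤ ‖v‖ * ‖w‖ := norm_inner_le_norm v w
      _ ≤ ‖v‖ * 1 := by
        have : ‖w‖ ≤ 1 := le_of_lt (by simpa using hw)
        exact mul_le_mul_of_nonneg_left this (norm_nonneg v)
      _ = ‖v‖ := mul_one _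
  exact Filter.mem_of_superset (Metric.ball_mem_nhds 0 one_pos) this

/-- A compact operator cannot have an infinite orthonormal family of eigenvectors
with a common nonzero eigenvalue. -/
lemma no_compact_eigen {H : Type*} [NormedAddCommGroup H] [InnerProductSpace ℂ H]
    (e : ℕ → H) (he : Orthonormal ℂ e) {x : H →L[ℂ] H} (hx : IsCompactOperator ⇑x)
    {μ : ℂ} (hμ : μ ≠ 0) (h : ∀ n, x (e n) = μ • e n) : False := by
  obtain ⟨K, hK, hKmem⟩ := hx
  obtain ⟨ε, hε, hball⟩ := Metric.mem_nhds_iff.mp hKmem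
  set δ : ℂ := ((ε / 2 : ℝ) : ℂ) with hδdef
  have hδnorm : ‖δ‖ = ε / 2 := by
    rw [hδdef, Complex.norm_real, Real.norm_eq_abs, abs_of_pos (half_pos hε)]
  set y : ℕ → H := fun n => (δ * μ) • e n with hy
  have hyK : ∀ n, y n ∈ K := by
    intro n
    have hmem : δ • e n ∈ Metric.ball (0 : H) ε := by
      simp only [Metric.mem_ball, dist_zero_right, norm_smul, he.1 n, mul_one, hδnorm]
      linarith
    have := hball hmem
    simpa [hy, mul_smul, h n, smul_comm δ μ] using this
  obtain ⟨l, _, φ, hφ, htend⟩ := hK.tendsto_subseq hyK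
  -- pairwise distances are bounded below
  have hdist : ∀ i j, i ≠ j → (ε / 2) * ‖μ‖ ≤ dist (y i) (y j) := by
    intro i j hij
    have hnorm2 : ‖e i - e j‖ ^ 2 = 2 := by
      have := @norm_sub_sq ℂ H _ _ _ (e i) (e j)
      rw [he.2 hij] at this
      simp only [he.1 i, he.1 j, map_zero, mul_zero, sub_zero, one_pow] at this
      linarith
    have h1 : (1 : ℝ) ≤ ‖e i - e j‖ := by
      nlinarith [norm_nonneg (e i - e j)]
    have : dist (y i) (y j) = ‖δ * μ‖ * ‖e i - e j‖ := by
      rw [dist_eq_norm, hy, ← smul_sub, norm_smul]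
    rw [this, norm_mul, hδnorm]
    calc (ε / 2) * ‖μ‖ = (ε / 2 * ‖μ‖) * 1 := (mul_one _).symm
      _ ≤ ε / 2 * ‖μ‖ * ‖e i - e j‖ := by
        apply mul_le_mul_of_nonneg_left h1
        positivity
  have hr : (0 : ℝ) < (ε / 2) * ‖μ‖ := by
    have : (0:ℝ) < ‖μ‖ := norm_pos_iff.mpr hμ
    positivity
  have hcauchy := htend.cauchySeq
  rw [Metric.cauchySeq_iff] at hcauchy
  obtain ⟨N, hN⟩ := hcauchy _ hr
  have hlt := hN (N + 1) (Nat.le_succ N) N le_rfl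
  have hne : φ (N + 1) ≠ φ N := (hφ (Nat.lt_succ_self N)).ne'
  have := hdist (φ (N + 1)) (φ N) hne
  simp only [Function.comp] at hlt
  linarith

theorem exists_outer_derivation_on_compact_operators
    (H : Type*) [NormedAddCommGroup H] [InnerProductSpace ℂ H] [CompleteSpace H]
    [TopologicalSpace.SeparableSpace H] (hinf : ¬ FiniteDimensional ℂ H) :
    ∃ D : (H →L[ℂ] H) → (H →L[ℂ] H),
      (∀ S T : H →L[ℂ] H, IsCompactOperator ⇑S → IsCompactOperator ⇑T →
        D (S + T) = D S + D T) ∧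
      (∀ (c : ℂ) (T : H →L[ℂ] H), IsCompactOperator ⇑T → D (c • T) = c • D T) ∧
      (∃ C : ℝ, ∀ T : H →L[ℂ] H, IsCompactOperator ⇑T → ‖D T‖ ≤ C * ‖T‖) ∧
      (∀ S T : H →L[ℂ] H, IsCompactOperator ⇑S → IsCompactOperator ⇑T →
        D (S * T) = S * D T + D S * T) ∧
      (∀ T : H →L[ℂ] H, IsCompactOperator ⇑T → IsCompactOperator ⇑(D T)) ∧
      (∀ x : H →L[ℂ] H, IsCompactOperator ⇑x →
        ∃ T : H →L[ℂ] H, IsCompactOperator ⇑T ∧ D T ≠ T * x - x * T) := by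
  classical
  -- obtain an orthonormal sequence
  obtain ⟨w, b, hbw⟩ := exists_hilbertBasis ℂ H
  have hwinf : w.Infinite := by
    intro hfin
    apply hinf
    have hdense := b.dense_span
    rw [hbw, Subtype.range_coe] at hdense
    have hfd : FiniteDimensional ℂ (Submodule.span ℂ w) :=
      FiniteDimensional.span_of_finite ℂ hfin
    have hclosed : IsClosed ((Submodule.span ℂ w : Submodule ℂ H) : Set H) :=
      Submodule.closed_of_finiteDimensional _
    rw [hclosed.submodule_topologicalClosure_eq] at hdense
    rw [hdense] at hfd
    exact Module.Finite.equiv (Submodule.topEquiv)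
  have hb_on : Orthonormal ℂ (Subtype.val : w → H) := hbw ▸ b.orthonormal
  let f : ℕ ↪ w := (Set.infinite_coe_iff.mpr hwinf).natEmbedding
  let e : ℕ → H := fun n => (f n : H)
  have he : Orthonormal ℂ e := hb_on.comp f f.injective
  -- the projection onto the closed span of even vectors
  let M : Submodule ℂ H :=
    (Submodule.span ℂ (Set.range (fun n => e (2 * n)))).topologicalClosure
  haveI : CompleteSpace M := (Submodule.isClosed_topologicalClosure _).completeSpace_coe
  let P : H →L[ℂ] H := M.subtypeL.comp M.orthogonalProjectionOnto
  have hPeven : ∀ n, P (e (2 * n)) = e (2 * n) := by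
    intro n
    have hmem : e (2 * n) ∈ M :=
      (Submodule.span ℂ _).le_topologicalClosure (Submodule.subset_span ⟨n, rfl⟩)
    exact Submodule.starProjection_eq_self_iff.mpr hmem
  have hPodd : ∀ n, P (e (2 * n + 1)) = 0 := by
    intro n
    have hmem : e (2 * n + 1) ∈ Mᗮ := by
      have hle : M ≤ (ℂ ∙ (e (2 * n + 1)))ᗮ := by
        apply Submodule.topologicalClosure_minimal
        · rw [Submodule.span_le]
          rintro _ ⟨m, rfl⟩
          rw [SetLike.mem_coe, Submodule.mem_orthogonal_singleton_iff_inner_left]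
          exact he.2 (by omega)
        · exact Submodule.isClosed_orthogonal _
      rw [Submodule.mem_orthogonal]
      intro u hu
      exact Submodule.mem_orthogonal_singleton_iff_inner_left.mp (hle hu)
    have : M.orthogonalProjectionOnto (e (2 * n + 1)) = 0 :=
      Submodule.orthogonalProjectionOnto_apply_of_mem_orthogonal hmem
    simp only [P, ContinuousLinearMap.comp_apply, this, ZeroMemClass.coe_zero, Submodule.subtypeL_apply]
  refine ⟨fun T => T * P - P * T, ?_, ?_, ?_, ?_, ?_, ?_⟩
  · intro S T _ _; noncomm_ring
  · intro c T _; simp [smul_sub, smul_mul_assoc, mul_smul_comm]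
  · refine ⟨2 * ‖P‖, fun T _ => ?_⟩
    calc ‖T * P - P * T‖ ≤ ‖T * P‖ + ‖P * T‖ := norm_sub_le _ _
      _ ≤ ‖T‖ * ‖P‖ + ‖P‖ * ‖T‖ := add_le_add (norm_mul_le _ _) (norm_mul_le _ _)
      _ = 2 * ‖P‖ * ‖T‖ := by ring
  · intro S T _ _; noncomm_ring
  · intro T hT
    have h1 : IsCompactOperator (⇑T ∘ ⇑P) := hT.comp_clm P
    have h2 : IsCompactOperator (⇑P ∘ ⇑T) := hT.clm_comp P
    have : ⇑(T * P - P * T) = (⇑T ∘ ⇑P) - (⇑P ∘ ⇑T) := rfl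
    rw [this]
    exact h1.sub h2
  · intro x hx
    by_contra hcon
    push_neg at hcon
    -- every compact T commutes with c := P - x
    set c : H →L[ℂ] H := P - x with hc
    have hcomm : ∀ T : H →L[ℂ] H, IsCompactOperator ⇑T → T * c = c * T := by
      intro T hT
      have hT2 := hcon T hT
      rw [hc, mul_sub, sub_mul, sub_eq_sub_iff_sub_eq_sub]
      exact hT2
    -- hence c is scalar
    set μ : ℂ := ⟪e 0, c (e 0)⟫ with hμdef
    have hscal : ∀ u : H, c u = μ • u := by
      intro u
      let T : H →L[ℂ] H := (innerSL ℂ (e 0)).smulRight u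
      have hTc : IsCompactOperator ⇑T := by
        have : ⇑T = fun w => ⟪e 0, w⟫ • u := rfl
        rw [this]
        exact rankOne_isCompactOperator u (e 0)
      have := congrArg (fun S : H →L[ℂ] H => S (e 0)) (hcomm T hTc)
      simp only [ContinuousLinearMap.mul_apply] at this
      have hTapp : ∀ w, T w = ⟪e 0, w⟫ • u := fun w => rfl
      rw [hTapp, hTapp] at this
      have h00 : ⟪e 0, e 0⟫ = 1 := by
        rw [@inner_self_eq_norm_sq_to_K ℂ, he.1 0]; norm_num
      rw [h00, one_smul] at this
      exact this.symm
    -- so x = P - μ • 1 has infinite orthonormal eigenfamilies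
    have hxval : ∀ u : H, x u = P u - μ • u := by
      intro u
      have := hscal u
      rw [hc] at this
      simp only [ContinuousLinearMap.sub_apply] at this
      linear_combination (norm := module) -this
    have heven : Orthonormal ℂ (fun n => e (2 * n)) :=
      he.comp _ (fun a b hab => by omega)
    have hodd : Orthonormal ℂ (fun n => e (2 * n + 1)) :=
      he.comp _ (fun a b hab => by omega)
    by_cases hμ0 : μ = 0
    · exact no_compact_eigen _ heven hx (μ := 1) one_ne_zero
        (fun n => by rw [hxval, hPeven, hμ0, zero_smul, sub_zero, one_smul])
    · exact no_compact_eigen _ hodd hx (μ := -μ) (neg_ne_zero.mpr hμ0)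
        (fun n => by rw [hxval, hPodd, zero_sub, neg_smul])
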